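/- For any linear relation (V,C), both (C^♭, C|_{C^♭}) and (C^♯, C|_{C^♯}) are pure submodules of (V,C) when regarded as Kronecker modules; i.e., every morphism from a finite-dimensional Kronecker module to the quotient (V/U, C/C|_U) lifts to (V,C), for U = C^♭ and U = C^♯. -/

import Mathlib

variable {K : Type*} [Field K]

section Defs
variable {V : Type*} [AddCommGroup V] [Module K V]

/-- A ℤ-indexed chain through the relation `C`. -/
def IsCChain (C : Submodule K (V × V)) (f : ℤ → V) : Prop :=
  ∀ n : ℤ, (f n, f (n + 1)) ∈ C

/-- `C^♯`: elements lying on a bi-infinite chain. -/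
def csharp (C : Submodule K (V × V)) : Set V :=
  {v | ∃ f : ℤ → V, IsCChain C f ∧ f 0 = v}

/-- `C₊`: elements lying on a bi-infinite chain which is eventually zero to the right. -/
def cplus (C : Submodule K (V × V)) : Set V :=
  {v | ∃ f : ℤ → V, IsCChain C f ∧ f 0 = v ∧ ∃ N : ℤ, ∀ n ≥ N, f n = 0}

/-- `C₋`: elements lying on a bi-infinite chain which is eventually zero to the left. -/
def cminus (C : Submodule K (V × V)) : Set V :=
  {v | ∃ f : ℤ → V, IsCChain C f ∧ f 0 = v ∧ ∃ N : ℤ, ∀ n ≤ N, f n = 0}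

/-- `C^♭ = C₊ + C₋`. -/
def cflat (C : Submodule K (V × V)) : Set V :=
  {v | ∃ a ∈ cplus C, ∃ b ∈ cminus C, v = a + b}

end Defs

/-! ### Auxiliary machinery -/

section Aux

variable {V : Type*} [AddCommGroup V] [Module K V]

namespace KroneckerPure

lemma chain_shift {C : Submodule K (V × V)} {f : ℤ → V} (hf : IsCChain C f) (m : ℤ) :
    IsCChain C (fun n => f (m + n)) := by
  intro n
  show (f (m + n), f (m + (n + 1))) ∈ C
  have e : m + (n + 1) = (m + n) + 1 := by ring
  rw [e]
  exact hf (m + n)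

lemma mem_csharp_of_chain {C : Submodule K (V × V)} {f : ℤ → V} (hf : IsCChain C f) (m : ℤ) :
    f m ∈ csharp C :=
  ⟨fun n => f (m + n), chain_shift hf m, by simp⟩

lemma mem_cplus_of_chain {C : Submodule K (V × V)} {f : ℤ → V} (hf : IsCChain C f)
    {N : ℤ} (hN : ∀ n ≥ N, f n = 0) (m : ℤ) : f m ∈ cplus C :=
  ⟨fun n => f (m + n), chain_shift hf m, by simp, N - m, fun n hn => hN _ (by omega)⟩

lemma mem_cminus_of_chain {C : Submodule K (V × V)} {f : ℤ → V} (hf : IsCChain C f)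
    {N : ℤ} (hN : ∀ n ≤ N, f n = 0) (m : ℤ) : f m ∈ cminus C :=
  ⟨fun n => f (m + n), chain_shift hf m, by simp, N - m, fun n hn => hN _ (by omega)⟩

lemma zero_mem_cplus (C : Submodule K (V × V)) : (0 : V) ∈ cplus C :=
  ⟨fun _ => 0, fun _ => C.zero_mem, rfl, 0, fun _ _ => rfl⟩

lemma zero_mem_cminus (C : Submodule K (V × V)) : (0 : V) ∈ cminus C :=
  ⟨fun _ => 0, fun _ => C.zero_mem, rfl, 0, fun _ _ => rfl⟩

/-- `C₊` as a submodule. -/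
noncomputable def cplusSub (C : Submodule K (V × V)) : Submodule K V where
  carrier := cplus C
  zero_mem' := zero_mem_cplus C
  add_mem' := by
    rintro a b ⟨f, hf, hf0, Nf, hNf⟩ ⟨g, hg, hg0, Ng, hNg⟩
    refine ⟨fun n => f n + g n, fun n => ?_, by show f 0 + g 0 = a + b; rw [hf0, hg0], max Nf Ng, fun n hn => ?_⟩
    · have : (f n, f (n+1)) + (g n, g (n+1)) ∈ C := C.add_mem (hf n) (hg n)
      simpa using this
    · show f n + g n = 0
      rw [hNf n (le_of_max_le_left hn), hNg n (le_of_max_le_right hn), add_zero]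
  smul_mem' := by
    rintro c a ⟨f, hf, hf0, Nf, hNf⟩
    refine ⟨fun n => c • f n, fun n => ?_, by show c • f 0 = c • a; rw [hf0], Nf, fun n hn => ?_⟩
    · have : c • ((f n, f (n+1)) : V × V) ∈ C := C.smul_mem c (hf n)
      simpa using this
    · show c • f n = 0
      rw [hNf n hn, smul_zero]

/-- `C₋` as a submodule. -/
noncomputable def cminusSub (C : Submodule K (V × V)) : Submodule K V where
  carrier := cminus C
  zero_mem' := zero_mem_cminus C
  add_mem' := by
    rintro a b ⟨f, hf, hf0, Nf, hNf⟩ ⟨g, hg, hg0, Ng, hNg⟩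
    refine ⟨fun n => f n + g n, fun n => ?_, by show f 0 + g 0 = a + b; rw [hf0, hg0], min Nf Ng, fun n hn => ?_⟩
    · have : (f n, f (n+1)) + (g n, g (n+1)) ∈ C := C.add_mem (hf n) (hg n)
      simpa using this
    · show f n + g n = 0
      rw [hNf n (le_trans hn (min_le_left _ _)), hNg n (le_trans hn (min_le_right _ _)), add_zero]
  smul_mem' := by
    rintro c a ⟨f, hf, hf0, Nf, hNf⟩
    refine ⟨fun n => c • f n, fun n => ?_, by show c • f 0 = c • a; rw [hf0], Nf, fun n hn => ?_⟩
    · have : c • ((f n, f (n+1)) : V × V) ∈ C := C.smul_mem c (hf n)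
      simpa using this
    · show c • f n = 0
      rw [hNf n hn, smul_zero]

lemma cplus_subset_cflat (C : Submodule K (V × V)) : cplus C ⊆ cflat C :=
  fun a ha => ⟨a, ha, 0, zero_mem_cminus C, (add_zero a).symm⟩

lemma cminus_subset_cflat (C : Submodule K (V × V)) : cminus C ⊆ cflat C :=
  fun b hb => ⟨0, zero_mem_cplus C, b, hb, (zero_add b).symm⟩

section WithS

variable (C : Submodule K (V × V)) (S : Submodule K V)

/-- Every element of `S` has a `C`-successor inside `S`. -/
def Ax1 : Prop := ∀ s ∈ S, ∃ t ∈ S, ((s, t) : V × V) ∈ C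

/-- Every element of `S` has a `C`-predecessor inside `S`. -/
def Ax2 : Prop := ∀ s ∈ S, ∃ t ∈ S, ((t, s) : V × V) ∈ C

variable {C S}

lemma mem_S_iff_sharp (hS : (S : Set V) = csharp C) {v : V} : v ∈ S ↔ v ∈ csharp C := by
  rw [← SetLike.mem_coe, hS]

lemma mem_S_iff_flat (hS : (S : Set V) = cflat C) {v : V} : v ∈ S ↔ v ∈ cflat C := by
  rw [← SetLike.mem_coe, hS]

lemma ax1_sharp (hS : (S : Set V) = csharp C) : Ax1 C S := by
  intro s hs
  obtain ⟨f, hf, hf0⟩ := (mem_S_iff_sharp hS).1 hs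
  refine ⟨f 1, (mem_S_iff_sharp hS).2 (mem_csharp_of_chain hf 1), ?_⟩
  rw [← hf0]; exact hf 0

lemma ax2_sharp (hS : (S : Set V) = csharp C) : Ax2 C S := by
  intro s hs
  obtain ⟨f, hf, hf0⟩ := (mem_S_iff_sharp hS).1 hs
  refine ⟨f (-1), (mem_S_iff_sharp hS).2 (mem_csharp_of_chain hf (-1)), ?_⟩
  have := hf (-1)
  rw [show (-1 : ℤ) + 1 = 0 by ring, hf0] at this
  exact this

lemma ax1_flat (hS : (S : Set V) = cflat C) : Ax1 C S := by
  intro s hs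
  obtain ⟨a, ⟨f, hf, hf0, Nf, hNf⟩, b, ⟨g, hg, hg0, Ng, hNg⟩, hab⟩ := (mem_S_iff_flat hS).1 hs
  refine ⟨f 1 + g 1, (mem_S_iff_flat hS).2
    ⟨f 1, mem_cplus_of_chain hf hNf 1, g 1, mem_cminus_of_chain hg hNg 1, rfl⟩, ?_⟩
  have : (f 0, f 1) + (g 0, g 1) ∈ C := C.add_mem (hf 0) (hg 0)
  rw [hab, ← hf0, ← hg0]
  simpa using this

lemma ax2_flat (hS : (S : Set V) = cflat C) : Ax2 C S := by
  intro s hs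
  obtain ⟨a, ⟨f, hf, hf0, Nf, hNf⟩, b, ⟨g, hg, hg0, Ng, hNg⟩, hab⟩ := (mem_S_iff_flat hS).1 hs
  refine ⟨f (-1) + g (-1), (mem_S_iff_flat hS).2
    ⟨f (-1), mem_cplus_of_chain hf hNf (-1), g (-1), mem_cminus_of_chain hg hNg (-1), rfl⟩, ?_⟩
  have h1 := hf (-1); have h2 := hg (-1)
  rw [show (-1 : ℤ) + 1 = 0 by ring] at h1 h2
  have : (f (-1), f 0) + (g (-1), g 0) ∈ C := C.add_mem h1 h2
  rw [hab, ← hf0, ← hg0]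
  simpa using this

/-- Unfold membership in the image relation `D`. -/
lemma exists_of_mem_D {z : (V ⧸ S) × (V ⧸ S)}
    (hz : z ∈ C.map (S.mkQ.prodMap S.mkQ)) :
    ∃ c ∈ C, S.mkQ (Prod.fst c) = z.1 ∧ S.mkQ (Prod.snd c) = z.2 := by
  obtain ⟨c, hc, hce⟩ := Submodule.mem_map.1 hz
  exact ⟨c, hc, by rw [← hce]; rfl, by rw [← hce]; rfl⟩

lemma fwd_chain (hAx1 : Ax1 C S) (h : ℕ → V ⧸ S)
    (hstep : ∀ m : ℕ, ((h m, h (m + 1)) : _ × _) ∈ C.map (S.mkQ.prodMap S.mkQ))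
    (v₀ : V) (hv₀ : S.mkQ v₀ = h 0) :
    ∃ g : ℕ → V, g 0 = v₀ ∧ (∀ m, S.mkQ (g m) = h m) ∧ ∀ m, ((g m, g (m + 1)) : V × V) ∈ C := by
  have step : ∀ (m : ℕ) (v : V), S.mkQ v = h m →
      ∃ w : V, S.mkQ w = h (m + 1) ∧ ((v, w) : V × V) ∈ C := by
    intro m v hv
    obtain ⟨c, hc, hc1, hc2⟩ := exists_of_mem_D (hstep m)
    have hvS : v - c.1 ∈ S := (Submodule.Quotient.eq S).1
      (by simpa using hv.trans hc1.symm)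
    obtain ⟨t, htS, htC⟩ := hAx1 _ hvS
    have ht0 : S.mkQ t = 0 := by simpa using (Submodule.Quotient.mk_eq_zero S).2 htS
    refine ⟨c.2 + t, ?_, ?_⟩
    · rw [map_add, hc2, ht0, add_zero]
    · have := C.add_mem hc htC
      have e : ((c.1, c.2) : V × V) + (v - c.1, t) = (v, c.2 + t) := by
        simp [Prod.ext_iff]
      rwa [e] at this
  choose F hF1 hF2 using step
  let G : (m : ℕ) → {v : V // S.mkQ v = h m} := fun m =>
    Nat.rec ⟨v₀, hv₀⟩ (fun m p => ⟨F m p.1 p.2, hF1 m p.1 p.2⟩) m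
  exact ⟨fun m => (G m).1, rfl, fun m => (G m).2, fun m => hF2 m (G m).1 (G m).2⟩

lemma bwd_chain (hAx2 : Ax2 C S) (h : ℕ → V ⧸ S)
    (hstep : ∀ m : ℕ, ((h (m + 1), h m) : _ × _) ∈ C.map (S.mkQ.prodMap S.mkQ))
    (v₀ : V) (hv₀ : S.mkQ v₀ = h 0) :
    ∃ g : ℕ → V, g 0 = v₀ ∧ (∀ m, S.mkQ (g m) = h m) ∧ ∀ m, ((g (m + 1), g m) : V × V) ∈ C := by
  have step : ∀ (m : ℕ) (v : V), S.mkQ v = h m →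
      ∃ w : V, S.mkQ w = h (m + 1) ∧ ((w, v) : V × V) ∈ C := by
    intro m v hv
    obtain ⟨c, hc, hc1, hc2⟩ := exists_of_mem_D (hstep m)
    have hvS : v - c.2 ∈ S := (Submodule.Quotient.eq S).1
      (by simpa using hv.trans hc2.symm)
    obtain ⟨t, htS, htC⟩ := hAx2 _ hvS
    have ht0 : S.mkQ t = 0 := by simpa using (Submodule.Quotient.mk_eq_zero S).2 htS
    refine ⟨c.1 + t, ?_, ?_⟩
    · rw [map_add, hc1, ht0, add_zero]
    · have := C.add_mem hc htC
      have e : ((c.1, c.2) : V × V) + (t, v - c.2) = (c.1 + t, v) := by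
        simp [Prod.ext_iff]
      rwa [e] at this
  choose F hF1 hF2 using step
  let G : (m : ℕ) → {v : V // S.mkQ v = h m} := fun m =>
    Nat.rec ⟨v₀, hv₀⟩ (fun m p => ⟨F m p.1 p.2, hF1 m p.1 p.2⟩) m
  exact ⟨fun m => (G m).1, rfl, fun m => (G m).2, fun m => hF2 m (G m).1 (G m).2⟩

lemma sharp_chain_zero (hS : (S : Set V) = csharp C) (f : ℤ → V ⧸ S)
    (hf : ∀ n : ℤ, ((f n, f (n + 1)) : _ × _) ∈ C.map (S.mkQ.prodMap S.mkQ)) : f 0 = 0 := by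
  obtain ⟨v₀, hv₀⟩ := S.mkQ_surjective (f 0)
  obtain ⟨gf, hgf0, hgfQ, hgfC⟩ := fwd_chain (ax1_sharp hS) (fun m => f m)
    (fun m => by
      show ((f m, f ((m : ℕ) + 1 : ℕ)) : _ × _) ∈ _
      push_cast
      exact hf m) v₀ hv₀
  obtain ⟨gb, hgb0, hgbQ, hgbC⟩ := bwd_chain (ax2_sharp hS) (fun m => f (-(m : ℤ)))
    (fun m => by
      show ((f (-((m : ℕ) + 1 : ℕ)), f (-(m : ℤ))) : _ × _) ∈ _
      have h := hf (-(m : ℤ) - 1)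
      have e1 : (-((m : ℕ) + 1 : ℕ) : ℤ) = -(m : ℤ) - 1 := by push_cast; ring
      have e2 : (-(m : ℤ) - 1 + 1) = -(m : ℤ) := by ring
      rw [e2] at h
      rw [e1]
      exact h) v₀ (by simpa using hv₀)
  let g : ℤ → V := fun n => if 0 ≤ n then gf n.toNat else gb (-n).toNat
  have hgdef : ∀ n : ℤ, g n = if 0 ≤ n then gf n.toNat else gb (-n).toNat := fun n => rfl
  have hchain : IsCChain C g := by
    intro n
    by_cases h0 : 0 ≤ n
    · rw [hgdef n, hgdef (n + 1), if_pos h0, if_pos (by omega : (0:ℤ) ≤ n + 1)]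
      have e : (n + 1).toNat = n.toNat + 1 := by omega
      rw [e]
      exact hgfC n.toNat
    · by_cases h1 : n = -1
      · rw [hgdef n, hgdef (n + 1), if_neg h0, if_pos (by omega : (0:ℤ) ≤ n + 1)]
        have e1 : (-n).toNat = 1 := by omega
        have e2 : (n + 1).toNat = 0 := by omega
        rw [e1, e2, hgf0, ← hgb0]
        exact hgbC 0
      · rw [hgdef n, hgdef (n + 1), if_neg h0, if_neg (by omega)]
        have e : (-n).toNat = (-(n + 1)).toNat + 1 := by omega
        rw [e]
        exact hgbC (-(n + 1)).toNat
  have hv₀S : v₀ ∈ S := (mem_S_iff_sharp hS).2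
    ⟨g, hchain, by rw [hgdef 0, if_pos le_rfl]; simpa using hgf0⟩
  rw [← hv₀]
  simpa using (Submodule.Quotient.mk_eq_zero S).2 hv₀S

lemma flat_capped_zero (hS : (S : Set V) = cflat C) (h : ℕ → V ⧸ S)
    (h0 : (((0 : V ⧸ S), h 0) : _ × _) ∈ C.map (S.mkQ.prodMap S.mkQ))
    (hstep : ∀ m : ℕ, ((h m, h (m + 1)) : _ × _) ∈ C.map (S.mkQ.prodMap S.mkQ)) :
    ∀ m, h m = 0 := by
  obtain ⟨c, hc, hc1, hc2⟩ := exists_of_mem_D h0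
  have hc1S : c.1 ∈ S := (Submodule.Quotient.mk_eq_zero S).1 (by simpa using hc1)
  obtain ⟨t, htS, htC⟩ := ax1_flat hS _ hc1S
  have h0' : ((0, c.2 - t) : V × V) ∈ C := by
    have := C.sub_mem hc htC
    have e : ((c.1, c.2) : V × V) - (c.1, t) = (0, c.2 - t) := by simp [Prod.ext_iff]
    rwa [e] at this
  have ht0 : S.mkQ t = 0 := by simpa using (Submodule.Quotient.mk_eq_zero S).2 htS
  have hv₀ : S.mkQ (c.2 - t) = h 0 := by rw [map_sub, hc2, ht0, sub_zero]
  obtain ⟨g, hg0, hgQ, hgC⟩ := fwd_chain (ax1_flat hS) h hstep _ hv₀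
  intro m
  have hmem : g m ∈ cminus C := by
    let f : ℤ → V := fun n => if 0 ≤ n + (m : ℤ) then g (n + m).toNat else 0
    have hfdef : ∀ n : ℤ, f n = if 0 ≤ n + (m : ℤ) then g (n + m).toNat else 0 := fun n => rfl
    refine ⟨f, ?_, ?_, -(m : ℤ) - 1, fun n hn => ?_⟩
    · intro n
      by_cases hp : 0 ≤ n + (m : ℤ)
      · rw [hfdef n, hfdef (n + 1), if_pos hp, if_pos (by omega)]
        have e : (n + 1 + m).toNat = (n + m).toNat + 1 := by omega
        rw [e]
        exact hgC _
      · by_cases hq : n + (m : ℤ) = -1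
        · rw [hfdef n, hfdef (n + 1), if_neg hp, if_pos (by omega)]
          have e : (n + 1 + (m : ℤ)).toNat = 0 := by omega
          rw [e, hg0]
          exact h0'
        · rw [hfdef n, hfdef (n + 1), if_neg hp, if_neg (by omega)]
          exact C.zero_mem
    · rw [hfdef 0, if_pos (by omega)]
      have e : ((0 : ℤ) + m).toNat = m := by omega
      rw [e]
    · rw [hfdef n, if_neg (by omega)]
  have hgS : g m ∈ S := (mem_S_iff_flat hS).2 (cminus_subset_cflat C hmem)
  rw [← hgQ m]
  simpa using (Submodule.Quotient.mk_eq_zero S).2 hgS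

lemma exists_linear_lift {W : Type*} [AddCommGroup W] [Module K W] (g : W →ₗ[K] V ⧸ S) :
    ∃ g' : W →ₗ[K] V, ∀ w, S.mkQ (g' w) = g w := by
  obtain ⟨g', hg'⟩ := Module.projective_lifting_property S.mkQ g S.mkQ_surjective
  exact ⟨g', fun w => by rw [← hg']; rfl⟩

lemma forall_mem_of_basis {W W' : Type*} [AddCommGroup W] [Module K W]
    [AddCommGroup W'] [Module K W'] {ι : Type*} (b : Module.Basis ι K W)
    (f : W →ₗ[K] W') (P : Submodule K W') (h : ∀ i, f (b i) ∈ P) : ∀ w, f w ∈ P := by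
  intro w
  have hc : P.mkQ.comp f = 0 :=
    b.ext fun i => by simpa using (Submodule.Quotient.mk_eq_zero P).2 (h i)
  exact (Submodule.Quotient.mk_eq_zero P).1 (by simpa using LinearMap.congr_fun hc w)

lemma final_sharp (hS : (S : Set V) = csharp C)
    {X Y : Type*} [AddCommGroup X] [Module K X] [AddCommGroup Y] [Module K Y]
    (pM qM : X →ₗ[K] Y) (hp : LinearMap.range pM = ⊤) (hq : LinearMap.range qM = ⊤)
    (φ : Y →ₗ[K] V ⧸ S)
    (hφ : ∀ x, ((φ (pM x), φ (qM x)) : _ × _) ∈ C.map (S.mkQ.prodMap S.mkQ)) :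
    ∃ φ' : Y →ₗ[K] V, (∀ y, S.mkQ (φ' y) = φ y) ∧
      ∀ x, ((φ' (pM x), φ' (qM x)) : V × V) ∈ C := by
  obtain ⟨ρ, hρ⟩ := pM.exists_rightInverse_of_surjective hp
  obtain ⟨τ, hτ⟩ := qM.exists_rightInverse_of_surjective hq
  have hρ' : ∀ y, pM (ρ y) = y := fun y => by simpa using LinearMap.congr_fun hρ y
  have hτ' : ∀ y, qM (τ y) = y := fun y => by simpa using LinearMap.congr_fun hτ y
  set M : Y →ₗ[K] Y := qM.comp ρ with hM
  set Nn : Y →ₗ[K] Y := pM.comp τ with hNn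
  have keyM : ∀ (y : Y) (m : ℕ),
      ((φ ((M ^ m) y), φ ((M ^ (m + 1)) y)) : _ × _) ∈ C.map (S.mkQ.prodMap S.mkQ) := by
    intro y m
    have h1 : pM (ρ ((M ^ m) y)) = (M ^ m) y := hρ' _
    have h2 : qM (ρ ((M ^ m) y)) = (M ^ (m + 1)) y := by
      rw [pow_succ', Module.End.mul_apply]; rfl
    have := hφ (ρ ((M ^ m) y))
    rwa [h1, h2] at this
  have keyN : ∀ (y : Y) (m : ℕ),
      ((φ ((Nn ^ (m + 1)) y), φ ((Nn ^ m) y)) : _ × _) ∈ C.map (S.mkQ.prodMap S.mkQ) := by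
    intro y m
    have h1 : pM (τ ((Nn ^ m) y)) = (Nn ^ (m + 1)) y := by
      rw [pow_succ', Module.End.mul_apply]; rfl
    have h2 : qM (τ ((Nn ^ m) y)) = (Nn ^ m) y := hτ' _
    have := hφ (τ ((Nn ^ m) y))
    rwa [h1, h2] at this
  have hφ0 : ∀ y, φ y = 0 := by
    intro y
    let f : ℤ → V ⧸ S := fun n => if 0 ≤ n then φ ((M ^ n.toNat) y) else φ ((Nn ^ (-n).toNat) y)
    have hfdef : ∀ n : ℤ, f n = if 0 ≤ n then φ ((M ^ n.toNat) y) else φ ((Nn ^ (-n).toNat) y) :=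
      fun _ => rfl
    have hstep : ∀ n : ℤ, ((f n, f (n + 1)) : _ × _) ∈ C.map (S.mkQ.prodMap S.mkQ) := by
      intro n
      by_cases h0 : 0 ≤ n
      · rw [hfdef n, hfdef (n + 1), if_pos h0, if_pos (by omega),
          show (n + 1).toNat = n.toNat + 1 by omega]
        exact keyM y n.toNat
      · by_cases h1 : n = -1
        · rw [hfdef n, hfdef (n + 1), if_neg h0, if_pos (by omega),
            show (-n).toNat = 1 by omega, show (n + 1).toNat = 0 by omega, pow_one, pow_zero]
          have := keyN y 0
          rw [pow_one, pow_zero] at this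
          simpa using this
        · rw [hfdef n, hfdef (n + 1), if_neg h0, if_neg (by omega),
            show (-n).toNat = (-(n + 1)).toNat + 1 by omega]
          exact keyN y (-(n + 1)).toNat
    have hf0 := sharp_chain_zero hS f hstep
    rw [hfdef 0, if_pos le_rfl] at hf0
    simpa using hf0
  refine ⟨0, fun y => by simp [hφ0 y], fun x => by simp; exact C.zero_mem⟩

lemma solve_plus {YQ : Type*} [AddCommGroup YQ] [Module K YQ] [FiniteDimensional K YQ]
    (C : Submodule K (V × V)) (ε : YQ ≃ₗ[K] YQ) (d : YQ →ₗ[K] V) (hd : ∀ yq, d yq ∈ cplusSub C) :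
    ∃ x : YQ →ₗ[K] V, (∀ yq, x yq ∈ cplusSub C) ∧
      ∀ yq, ((x yq, x (ε yq) + d yq) : V × V) ∈ C := by
  classical
  let b := Module.finBasis K YQ
  have hd' : ∀ i, d (b i) ∈ cplus C := fun i => hd (b i)
  choose f hfC hf0 Nf hNf using hd'
  set N : ℕ := Finset.univ.sup (fun i => (Nf i).toNat) with hNdef
  have hvanish : ∀ i (t : ℕ), N ≤ t → f i t = 0 := by
    intro i t ht
    have h1 : (Nf i).toNat ≤ N := Finset.le_sup (f := fun i => (Nf i).toNat) (Finset.mem_univ i)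
    exact hNf i t (by omega)
  set h : ℕ → (YQ →ₗ[K] V) := fun t => b.constr K (fun i => f i t) with hhdef
  have happ : ∀ t i, h t (b i) = f i t := fun t i => b.constr_basis K _ i
  have hh0 : h 0 = d := b.ext fun i => by rw [happ]; simpa using hf0 i
  have hhC : ∀ (t : ℕ) (yq : YQ), ((h t yq, h (t + 1) yq) : V × V) ∈ C := by
    intro t
    apply forall_mem_of_basis b ((h t).prod (h (t + 1))) C
    intro i
    rw [LinearMap.prod_apply]
    show ((h t (b i), h (t + 1) (b i)) : V × V) ∈ C
    rw [happ, happ]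
    have := hfC i t
    have e : ((t : ℤ) + 1) = ((t + 1 : ℕ) : ℤ) := by push_cast; ring
    rwa [e] at this
  have hhP : ∀ (t : ℕ) (yq : YQ), h t yq ∈ cplusSub C := by
    intro t
    apply forall_mem_of_basis b (h t) (cplusSub C)
    intro i
    rw [happ]
    exact mem_cplus_of_chain (hfC i) (hNf i) t
  have hhvan : h N = 0 := by
    refine b.ext fun i => ?_
    rw [happ, hvanish i N le_rfl]
    simp
  set L : YQ →ₗ[K] YQ := (ε.symm : YQ →ₗ[K] YQ) with hL
  set x : YQ →ₗ[K] V := - ∑ t ∈ Finset.range N, (h t).comp (L ^ (t + 1)) with hx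
  have hxapp : ∀ yq, x yq = - ∑ t ∈ Finset.range N, h t ((L ^ (t + 1)) yq) := by
    intro yq
    rw [hx]
    simp
  refine ⟨x, ?_, ?_⟩
  · intro yq
    rw [hxapp]
    exact neg_mem (sum_mem fun t _ => hhP t _)
  · intro yq
    have hLε : ∀ t : ℕ, (L ^ (t + 1)) (ε yq) = (L ^ t) yq := by
      intro t
      rw [pow_succ, Module.End.mul_apply]
      congr 1
      exact ε.symm_apply_apply yq
    have hsum : ∑ t ∈ Finset.range N, h (t + 1) ((L ^ (t + 1)) yq)
        = (∑ t ∈ Finset.range N, h t ((L ^ t) yq)) - d yq := by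
      have h1 : ∑ t ∈ Finset.range (N + 1), h t ((L ^ t) yq)
          = (∑ t ∈ Finset.range N, h (t + 1) ((L ^ (t + 1)) yq)) + h 0 ((L ^ 0) yq) :=
        Finset.sum_range_succ' _ N
      have h2 : ∑ t ∈ Finset.range (N + 1), h t ((L ^ t) yq)
          = (∑ t ∈ Finset.range N, h t ((L ^ t) yq)) + h N ((L ^ N) yq) :=
        Finset.sum_range_succ _ N
      have h3 : h N ((L ^ N) yq) = 0 := by rw [hhvan]; simp
      have h4 : h 0 ((L ^ 0) yq) = d yq := by rw [hh0, pow_zero]; simp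
      rw [h4] at h1
      rw [h3, add_zero] at h2
      rw [h2] at h1
      exact eq_sub_of_add_eq h1.symm
    have key : ((x yq, x (ε yq) + d yq) : V × V) =
        - ∑ t ∈ Finset.range N, ((h t ((L ^ (t + 1)) yq), h (t + 1) ((L ^ (t + 1)) yq)) : V × V) := by
      have hfst : (- ∑ t ∈ Finset.range N,
          ((h t ((L ^ (t + 1)) yq), h (t + 1) ((L ^ (t + 1)) yq)) : V × V)).1
          = - ∑ t ∈ Finset.range N, h t ((L ^ (t + 1)) yq) := by
        simp [Prod.fst_sum]
      have hsnd : (- ∑ t ∈ Finset.range N,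
          ((h t ((L ^ (t + 1)) yq), h (t + 1) ((L ^ (t + 1)) yq)) : V × V)).2
          = - ∑ t ∈ Finset.range N, h (t + 1) ((L ^ (t + 1)) yq) := by
        simp [Prod.snd_sum]
      refine Prod.ext ?_ ?_
      · show x yq = _
        rw [hfst, hxapp]
      · show x (ε yq) + d yq = _
        rw [hsnd, hsum, hxapp (ε yq)]
        have e : ∑ t ∈ Finset.range N, h t ((L ^ (t + 1)) (ε yq))
            = ∑ t ∈ Finset.range N, h t ((L ^ t) yq) :=
          Finset.sum_congr rfl fun t _ => by rw [hLε t]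
        rw [e]
        abel
    rw [key]
    exact neg_mem (sum_mem fun t _ => hhC t _)

lemma solve_minus {YQ : Type*} [AddCommGroup YQ] [Module K YQ] [FiniteDimensional K YQ]
    (C : Submodule K (V × V)) (ε : YQ ≃ₗ[K] YQ) (d : YQ →ₗ[K] V) (hd : ∀ yq, d yq ∈ cminusSub C) :
    ∃ x : YQ →ₗ[K] V, (∀ yq, x yq ∈ cminusSub C) ∧
      ∀ yq, ((x yq, x (ε yq) + d yq) : V × V) ∈ C := by
  classical
  let b := Module.finBasis K YQ
  have hd' : ∀ i, d (b i) ∈ cminus C := fun i => hd (b i)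
  choose f hfC hf0 Nf hNf using hd'
  set N : ℕ := Finset.univ.sup (fun i => (-(Nf i)).toNat) with hNdef
  have hvanish : ∀ i (t : ℕ), N ≤ t → f i (-(t : ℤ)) = 0 := by
    intro i t ht
    have h1 : (-(Nf i)).toNat ≤ N := Finset.le_sup (f := fun i => (-(Nf i)).toNat) (Finset.mem_univ i)
    exact hNf i (-(t : ℤ)) (by omega)
  set h : ℕ → (YQ →ₗ[K] V) := fun t => b.constr K (fun i => f i (-(t : ℤ))) with hhdef
  have happ : ∀ t i, h t (b i) = f i (-(t : ℤ)) := fun t i => b.constr_basis K _ i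
  have hh0 : h 0 = d := b.ext fun i => by
    rw [happ]
    simpa using hf0 i
  have hhC : ∀ (t : ℕ) (yq : YQ), ((h (t + 1) yq, h t yq) : V × V) ∈ C := by
    intro t
    apply forall_mem_of_basis b ((h (t + 1)).prod (h t)) C
    intro i
    rw [LinearMap.prod_apply]
    show ((h (t + 1) (b i), h t (b i)) : V × V) ∈ C
    rw [happ, happ]
    have := hfC i (-((t : ℤ) + 1))
    have e : (-((t : ℤ) + 1) + 1) = -(t : ℤ) := by ring
    have e2 : (-((t : ℤ) + 1)) = -((t + 1 : ℕ) : ℤ) := by push_cast; ring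
    rw [e, e2] at this
    exact this
  have hhP : ∀ (t : ℕ) (yq : YQ), h t yq ∈ cminusSub C := by
    intro t
    apply forall_mem_of_basis b (h t) (cminusSub C)
    intro i
    rw [happ]
    exact mem_cminus_of_chain (hfC i) (hNf i) _
  have hhvan : h N = 0 := by
    refine b.ext fun i => ?_
    rw [happ, hvanish i N le_rfl]
    simp
  set Ml : YQ →ₗ[K] YQ := (ε : YQ →ₗ[K] YQ) with hMl
  set x : YQ →ₗ[K] V := ∑ t ∈ Finset.range N, (h (t + 1)).comp (Ml ^ t) with hx
  have hxapp : ∀ yq, x yq = ∑ t ∈ Finset.range N, h (t + 1) ((Ml ^ t) yq) := by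
    intro yq
    rw [hx]
    simp
  refine ⟨x, ?_, ?_⟩
  · intro yq
    rw [hxapp]
    exact sum_mem fun t _ => hhP _ _
  · intro yq
    have hMε : ∀ t : ℕ, (Ml ^ t) (ε yq) = (Ml ^ (t + 1)) yq := by
      intro t
      rw [pow_succ, Module.End.mul_apply]
      rfl
    have hsum : ∑ t ∈ Finset.range N, h t ((Ml ^ t) yq)
        = (∑ t ∈ Finset.range N, h (t + 1) ((Ml ^ (t + 1)) yq)) + d yq := by
      have h1 : ∑ t ∈ Finset.range (N + 1), h t ((Ml ^ t) yq)
          = (∑ t ∈ Finset.range N, h (t + 1) ((Ml ^ (t + 1)) yq)) + h 0 ((Ml ^ 0) yq) :=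
        Finset.sum_range_succ' _ N
      have h2 : ∑ t ∈ Finset.range (N + 1), h t ((Ml ^ t) yq)
          = (∑ t ∈ Finset.range N, h t ((Ml ^ t) yq)) + h N ((Ml ^ N) yq) :=
        Finset.sum_range_succ _ N
      have h3 : h N ((Ml ^ N) yq) = 0 := by rw [hhvan]; simp
      have h4 : h 0 ((Ml ^ 0) yq) = d yq := by rw [hh0, pow_zero]; simp
      rw [h4] at h1
      rw [h3, add_zero] at h2
      rw [h2] at h1
      exact h1
    have key : ((x yq, x (ε yq) + d yq) : V × V) =
        ∑ t ∈ Finset.range N, ((h (t + 1) ((Ml ^ t) yq), h t ((Ml ^ t) yq)) : V × V) := by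
      have hfst : (∑ t ∈ Finset.range N,
          ((h (t + 1) ((Ml ^ t) yq), h t ((Ml ^ t) yq)) : V × V)).1
          = ∑ t ∈ Finset.range N, h (t + 1) ((Ml ^ t) yq) := by
        simp [Prod.fst_sum]
      have hsnd : (∑ t ∈ Finset.range N,
          ((h (t + 1) ((Ml ^ t) yq), h t ((Ml ^ t) yq)) : V × V)).2
          = ∑ t ∈ Finset.range N, h t ((Ml ^ t) yq) := by
        simp [Prod.snd_sum]
      refine Prod.ext ?_ ?_
      · show x yq = _
        rw [hfst, hxapp]
      · show x (ε yq) + d yq = _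
        rw [hsnd, hsum, hxapp (ε yq)]
        have e : ∑ t ∈ Finset.range N, h (t + 1) ((Ml ^ t) (ε yq))
            = ∑ t ∈ Finset.range N, h (t + 1) ((Ml ^ (t + 1)) yq) :=
          Finset.sum_congr rfl fun t _ => by rw [hMε t]
        rw [e]
    rw [key]
    exact sum_mem fun t _ => hhC _ _

lemma final_flat (hS : (S : Set V) = cflat C)
    {X Y : Type*} [AddCommGroup X] [Module K X] [AddCommGroup Y] [Module K Y]
    [FiniteDimensional K Y]
    (pM qM : X →ₗ[K] Y) (hp : LinearMap.range pM = ⊤) (hq : LinearMap.range qM = ⊤)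
    (φ : Y →ₗ[K] V ⧸ S)
    (hφ : ∀ x, ((φ (pM x), φ (qM x)) : _ × _) ∈ C.map (S.mkQ.prodMap S.mkQ)) :
    ∃ φ' : Y →ₗ[K] V, (∀ y, S.mkQ (φ' y) = φ y) ∧
      ∀ x, ((φ' (pM x), φ' (qM x)) : V × V) ∈ C := by
  classical
  obtain ⟨ρ, hρ⟩ := pM.exists_rightInverse_of_surjective hp
  have hρ' : ∀ y, pM (ρ y) = y := fun y => by simpa using LinearMap.congr_fun hρ y
  set M : Y →ₗ[K] Y := qM.comp ρ with hM
  have keyφ : ∀ y : Y, ((φ y, φ (M y)) : _ × _) ∈ C.map (S.mkQ.prodMap S.mkQ) := by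
    intro y
    have := hφ (ρ y)
    rwa [hρ' y] at this
  have keyM : ∀ (y : Y) (m : ℕ),
      ((φ ((M ^ m) y), φ ((M ^ (m + 1)) y)) : _ × _) ∈ C.map (S.mkQ.prodMap S.mkQ) := by
    intro y m
    have := keyφ ((M ^ m) y)
    have e : M ((M ^ m) y) = (M ^ (m + 1)) y := by
      rw [pow_succ', Module.End.mul_apply]
    rwa [e] at this
  set W : Submodule K Y :=
    ⨆ m : ℕ, Submodule.map (M ^ m) ((LinearMap.ker pM).map qM) with hW
  have hgenW : ∀ (m : ℕ) (x : X), pM x = 0 → (M ^ m) (qM x) ∈ W := by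
    intro m x hx
    have h1 : qM x ∈ (LinearMap.ker pM).map qM :=
      Submodule.mem_map_of_mem (LinearMap.mem_ker.2 hx)
    exact le_iSup (fun m => Submodule.map (M ^ m) ((LinearMap.ker pM).map qM)) m
      (Submodule.mem_map_of_mem h1)
  have hWker : W ≤ LinearMap.ker φ := by
    rw [hW]
    apply iSup_le
    intro m
    rintro y ⟨z, ⟨x, hx, rfl⟩, rfl⟩
    have hx0 : pM x = 0 := LinearMap.mem_ker.1 hx
    have hcap := flat_capped_zero hS (fun t => φ ((M ^ t) (qM x)))
      (by
        have := hφ x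
        rw [hx0, map_zero] at this
        simpa using this)
      (fun t => keyM (qM x) t)
    exact LinearMap.mem_ker.2 (hcap m)
  have hWcomap : W ≤ W.comap M := by
    apply Submodule.map_le_iff_le_comap.1
    rw [hW, Submodule.map_iSup]
    apply iSup_le
    intro m
    rw [← Submodule.map_comp, ← Module.End.mul_eq_comp, ← pow_succ']
    exact le_iSup (fun m => Submodule.map (M ^ m) ((LinearMap.ker pM).map qM)) (m + 1)
  set Mt : (Y ⧸ W) →ₗ[K] (Y ⧸ W) := Submodule.mapQ W W M hWcomap with hMt
  have hMtmk : ∀ y : Y, Mt (W.mkQ y) = W.mkQ (M y) := fun y => by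
    simp only [Submodule.mkQ_apply, hMt, Submodule.mapQ_apply]
  have hkeystep : ∀ x : X, W.mkQ (qM x) = Mt (W.mkQ (pM x)) := by
    intro x
    rw [hMtmk]
    have hmem : qM x - M (pM x) ∈ W := by
      have h1 : qM x - M (pM x) = qM (x - ρ (pM x)) := by
        rw [map_sub]
        rfl
      have h2 : pM (x - ρ (pM x)) = 0 := by
        rw [map_sub, hρ' (pM x), sub_self]
      rw [h1]
      have := hgenW 0 (x - ρ (pM x)) h2
      rwa [pow_zero, Module.End.one_apply] at this
    simp only [Submodule.mkQ_apply]
    exact (Submodule.Quotient.eq W).2 hmem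
  have hsurj : Function.Surjective Mt := by
    intro yq
    obtain ⟨y, rfl⟩ := W.mkQ_surjective yq
    obtain ⟨x, rfl⟩ := LinearMap.range_eq_top.1 hq y
    exact ⟨W.mkQ (pM x), (hkeystep x).symm⟩
  have hbij : Function.Bijective Mt :=
    ⟨LinearMap.injective_iff_surjective.2 hsurj, hsurj⟩
  set ε : (Y ⧸ W) ≃ₗ[K] (Y ⧸ W) := LinearEquiv.ofBijective Mt hbij with hε
  have hεMt : ∀ yq, ε yq = Mt yq := fun _ => rfl
  set φt : (Y ⧸ W) →ₗ[K] V ⧸ S := W.liftQ φ hWker with hφt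
  have hφtmk : ∀ y : Y, φt (W.mkQ y) = φ y := fun y => rfl
  have hφtD : ∀ yq, ((φt yq, φt (Mt yq)) : _ × _) ∈ C.map (S.mkQ.prodMap S.mkQ) := by
    intro yq
    obtain ⟨y, rfl⟩ := W.mkQ_surjective yq
    rw [hφtmk, hMtmk, hφtmk]
    exact keyφ y
  obtain ⟨ψ₀, hψ₀⟩ := exists_linear_lift (S := S) φt
  set b := Module.finBasis K (Y ⧸ W) with hb
  have hDi : ∀ i, ((φt (b i), φt (Mt (b i))) : _ × _) ∈ C.map (S.mkQ.prodMap S.mkQ) :=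
    fun i => hφtD (b i)
  choose cc hccC hcc1 hcc2 using fun i => exists_of_mem_D (hDi i)
  set κ : (Y ⧸ W) →ₗ[K] V × V := b.constr K cc with hκ
  have hκb : ∀ i, κ (b i) = cc i := fun i => b.constr_basis K cc i
  have hκC : ∀ yq, κ yq ∈ C :=
    forall_mem_of_basis b κ C (fun i => by rw [hκb]; exact hccC i)
  set μ₁ : (Y ⧸ W) →ₗ[K] V := ψ₀ - (LinearMap.fst K V V).comp κ with hμ₁
  set μ₂ : (Y ⧸ W) →ₗ[K] V := ψ₀.comp Mt - (LinearMap.snd K V V).comp κ with hμ₂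
  have hμ₁app : ∀ yq, μ₁ yq = ψ₀ yq - (κ yq).1 := fun yq => rfl
  have hμ₂app : ∀ yq, μ₂ yq = ψ₀ (Mt yq) - (κ yq).2 := fun yq => rfl
  have hμ₁S : ∀ yq, μ₁ yq ∈ S := by
    apply forall_mem_of_basis b μ₁ S
    intro i
    have hq1 : S.mkQ (ψ₀ (b i)) = S.mkQ ((cc i).1) := by rw [hψ₀, hcc1]
    have := (Submodule.Quotient.eq S).1 (by simpa using hq1)
    rw [hμ₁app, hκb]
    exact this
  have hμ₂S : ∀ yq, μ₂ yq ∈ S := by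
    apply forall_mem_of_basis b μ₂ S
    intro i
    have hq2 : S.mkQ (ψ₀ (Mt (b i))) = S.mkQ ((cc i).2) := by rw [hψ₀, hcc2]
    have := (Submodule.Quotient.eq S).1 (by simpa using hq2)
    rw [hμ₂app, hκb]
    exact this
  -- split μ₁ and μ₂ into plus and minus parts
  have hsplit1 : ∀ i, ∃ a ∈ cplus C, ∃ e ∈ cminus C, μ₁ (b i) = a + e := by
    intro i
    obtain ⟨a, ha, e, he, hae⟩ := (mem_S_iff_flat hS).1 (hμ₁S (b i))
    exact ⟨a, ha, e, he, hae⟩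
  have hsplit2 : ∀ i, ∃ a ∈ cplus C, ∃ e ∈ cminus C, μ₂ (b i) = a + e := by
    intro i
    obtain ⟨a, ha, e, he, hae⟩ := (mem_S_iff_flat hS).1 (hμ₂S (b i))
    exact ⟨a, ha, e, he, hae⟩
  choose a1 ha1 e1 he1 hae1 using hsplit1
  choose a2 ha2 e2 he2 hae2 using hsplit2
  set μ₁p : (Y ⧸ W) →ₗ[K] V := b.constr K a1 with hμ₁p
  set μ₁m : (Y ⧸ W) →ₗ[K] V := b.constr K e1 with hμ₁m
  set μ₂p : (Y ⧸ W) →ₗ[K] V := b.constr K a2 with hμ₂p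
  set μ₂m : (Y ⧸ W) →ₗ[K] V := b.constr K e2 with hμ₂m
  have hμ₁sum : μ₁ = μ₁p + μ₁m := b.ext fun i => by
    rw [hae1 i]
    simp [hμ₁p, hμ₁m, Module.Basis.constr_basis]
  have hμ₂sum : μ₂ = μ₂p + μ₂m := b.ext fun i => by
    rw [hae2 i]
    simp [hμ₂p, hμ₂m, Module.Basis.constr_basis]
  have hμ₁pP : ∀ yq, μ₁p yq ∈ cplusSub C :=
    forall_mem_of_basis b μ₁p (cplusSub C) (fun i => by
      rw [hμ₁p, b.constr_basis]; exact ha1 i)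
  have hμ₁mP : ∀ yq, μ₁m yq ∈ cminusSub C :=
    forall_mem_of_basis b μ₁m (cminusSub C) (fun i => by
      rw [hμ₁m, b.constr_basis]; exact he1 i)
  have hμ₂pP : ∀ yq, μ₂p yq ∈ cplusSub C :=
    forall_mem_of_basis b μ₂p (cplusSub C) (fun i => by
      rw [hμ₂p, b.constr_basis]; exact ha2 i)
  have hμ₂mP : ∀ yq, μ₂m yq ∈ cminusSub C :=
    forall_mem_of_basis b μ₂m (cminusSub C) (fun i => by
      rw [hμ₂m, b.constr_basis]; exact he2 i)
  set dp : (Y ⧸ W) →ₗ[K] V := μ₁p.comp Mt - μ₂p with hdp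
  set dm : (Y ⧸ W) →ₗ[K] V := μ₁m.comp Mt - μ₂m with hdm
  have hdpP : ∀ yq, dp yq ∈ cplusSub C := fun yq =>
    sub_mem (hμ₁pP (Mt yq)) (hμ₂pP yq)
  have hdmP : ∀ yq, dm yq ∈ cminusSub C := fun yq =>
    sub_mem (hμ₁mP (Mt yq)) (hμ₂mP yq)
  obtain ⟨xp, hxpP, hxpC⟩ := solve_plus C ε dp hdpP
  obtain ⟨xm, hxmP, hxmC⟩ := solve_minus C ε dm hdmP
  set x : (Y ⧸ W) →ₗ[K] V := xp + xm with hxdef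
  have hxS : ∀ yq, x yq ∈ S := by
    intro yq
    apply (mem_S_iff_flat hS).2
    exact ⟨xp yq, hxpP yq, xm yq, hxmP yq, rfl⟩
  have hxC : ∀ yq, ((x yq, x (Mt yq) + (μ₁ (Mt yq) - μ₂ yq)) : V × V) ∈ C := by
    intro yq
    have h1 := hxpC yq
    have h2 := hxmC yq
    have hsum := C.add_mem h1 h2
    have e : ((xp yq, xp (ε yq) + dp yq) : V × V) + (xm yq, xm (ε yq) + dm yq)
        = (x yq, x (Mt yq) + (μ₁ (Mt yq) - μ₂ yq)) := by
      have hε' : ε yq = Mt yq := hεMt yq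
      refine Prod.ext ?_ ?_
      · show xp yq + xm yq = x yq
        rw [hxdef]; rfl
      · show (xp (ε yq) + dp yq) + (xm (ε yq) + dm yq) = x (Mt yq) + (μ₁ (Mt yq) - μ₂ yq)
        rw [hε']
        have ha : x (Mt yq) = xp (Mt yq) + xm (Mt yq) := rfl
        have hb' : μ₁ (Mt yq) = μ₁p (Mt yq) + μ₁m (Mt yq) := by
          rw [hμ₁sum]; rfl
        have hc' : μ₂ yq = μ₂p yq + μ₂m yq := by
          rw [hμ₂sum]; rfl
        have hdp' : dp yq = μ₁p (Mt yq) - μ₂p yq := rfl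
        have hdm' : dm yq = μ₁m (Mt yq) - μ₂m yq := rfl
        rw [ha, hb', hc', hdp', hdm']
        abel
    rwa [e] at hsum
  set ψ : (Y ⧸ W) →ₗ[K] V := ψ₀ - (x + μ₁) with hψ
  have hψapp : ∀ yq, ψ yq = ψ₀ yq - x yq - μ₁ yq := by
    intro yq
    rw [hψ]
    show ψ₀ yq - (x yq + μ₁ yq) = _
    abel
  have hψlift : ∀ yq, S.mkQ (ψ yq) = φt yq := by
    intro yq
    rw [hψapp, map_sub, map_sub, hψ₀]
    have hx0 : S.mkQ (x yq) = 0 := by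
      simpa using (Submodule.Quotient.mk_eq_zero S).2 (hxS yq)
    have hμ0 : S.mkQ (μ₁ yq) = 0 := by
      simpa using (Submodule.Quotient.mk_eq_zero S).2 (hμ₁S yq)
    rw [hx0, hμ0, sub_zero, sub_zero]
  have hψC : ∀ yq, ((ψ yq, ψ (Mt yq)) : V × V) ∈ C := by
    intro yq
    have h1 := hκC yq
    have h2 := hxC yq
    have hsub := C.sub_mem h1 h2
    have e : κ yq - ((x yq, x (Mt yq) + (μ₁ (Mt yq) - μ₂ yq)) : V × V)
        = (ψ yq, ψ (Mt yq)) := by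
      refine Prod.ext ?_ ?_
      · show (κ yq).1 - x yq = ψ yq
        have : (κ yq).1 = ψ₀ yq - μ₁ yq := by
          rw [hμ₁app]; abel
        rw [this, hψapp]
        abel
      · show (κ yq).2 - (x (Mt yq) + (μ₁ (Mt yq) - μ₂ yq)) = ψ (Mt yq)
        have : (κ yq).2 = ψ₀ (Mt yq) - μ₂ yq := by
          rw [hμ₂app]; abel
        rw [this, hψapp]
        abel
    rwa [e] at hsub
  refine ⟨ψ.comp W.mkQ, ?_, ?_⟩
  · intro y
    show S.mkQ (ψ (W.mkQ y)) = φ y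
    rw [hψlift, hφtmk]
  · intro x'
    show ((ψ (W.mkQ (pM x')), ψ (W.mkQ (qM x'))) : V × V) ∈ C
    rw [hkeystep x']
    exact hψC (W.mkQ (pM x'))

universe u₁ u₂

lemma key (hS : (S : Set V) = cflat C ∨ (S : Set V) = csharp C) : ∀ (n : ℕ),
    ∀ {X : Type u₁} {Y : Type u₂} [AddCommGroup X] [Module K X] [AddCommGroup Y] [Module K Y]
      [FiniteDimensional K Y] (pM qM : X →ₗ[K] Y) (φ : Y →ₗ[K] V ⧸ S),
      (∀ x, ((φ (pM x), φ (qM x)) : _ × _) ∈ C.map (S.mkQ.prodMap S.mkQ)) →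
      Module.finrank K Y < n →
      ∃ φ' : Y →ₗ[K] V, (∀ y, S.mkQ (φ' y) = φ y) ∧
        ∀ x, ((φ' (pM x), φ' (qM x)) : V × V) ∈ C := by
  have hAx1 : Ax1 C S := hS.elim ax1_flat ax1_sharp
  have hAx2 : Ax2 C S := hS.elim ax2_flat ax2_sharp
  intro n
  induction n with
  | zero =>
    intro X Y _ _ _ _ _ pM qM φ hφ hn
    omega
  | succ n ih =>
    intro X Y _ _ _ _ _ pM qM φ hφ hn
    by_cases hY₀ : (LinearMap.range pM ⊔ LinearMap.range qM) = ⊤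
    · by_cases hp : LinearMap.range pM = ⊤
      · by_cases hq : LinearMap.range qM = ⊤
        · -- final case: both surjective
          rcases hS with h | h
          · exact final_flat h pM qM hp hq φ hφ
          · exact final_sharp h pM qM hp hq φ hφ
        · -- case 3 : qM not surjective
          obtain ⟨y₀, hy₀⟩ : ∃ y, y ∉ LinearMap.range qM := by
            by_contra hcon
            push_neg at hcon
            exact hq (Submodule.eq_top_iff'.2 hcon)
          have hv : (LinearMap.range qM).mkQ y₀ ≠ 0 := by
            intro h0
            exact hy₀ ((Submodule.Quotient.mk_eq_zero _).1 (by simpa using h0))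
          obtain ⟨ζ, hζ⟩ : ∃ ζ : Module.Dual K (Y ⧸ LinearMap.range qM),
              ζ ((LinearMap.range qM).mkQ y₀) ≠ 0 := by
            by_contra hcon
            push_neg at hcon
            exact hv ((Module.forall_dual_apply_eq_zero_iff K _).1 hcon)
          set lam : Y →ₗ[K] K := ζ.comp (LinearMap.range qM).mkQ with hlam
          have hlq : ∀ x, lam (qM x) = 0 := by
            intro x
            have : (LinearMap.range qM).mkQ (qM x) = 0 := by
              simp [Submodule.mkQ_apply, (Submodule.Quotient.mk_eq_zero _).2 (LinearMap.mem_range_self qM x)]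
            show ζ ((LinearMap.range qM).mkQ (qM x)) = 0
            rw [this, map_zero]
          have hl0 : lam y₀ ≠ 0 := hζ
          set μ : X →ₗ[K] K := lam.comp pM with hμ
          have hμ0 : ∃ x, μ x ≠ 0 := by
            by_contra hcon
            push_neg at hcon
            apply hl0
            have hy₀mem : y₀ ∈ LinearMap.range pM ⊔ LinearMap.range qM := by
              rw [hY₀]; trivial
            obtain ⟨a, ha, b, hb, rfl⟩ := Submodule.mem_sup.1 hy₀mem
            obtain ⟨xa, rfl⟩ := ha
            obtain ⟨xb, rfl⟩ := hb
            rw [map_add, hlq xb, show lam (pM xa) = μ xa from rfl, hcon xa, add_zero]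
          obtain ⟨x₁, hx₁⟩ := hμ0
          have hμbig : μ ((μ x₁)⁻¹ • x₁) = 1 := by
            rw [map_smul, smul_eq_mul, inv_mul_cancel₀ hx₁]
          set xbig : X := (μ x₁)⁻¹ • x₁ with hxbig
          set ybig : Y := pM xbig with hybig
          have hlybig : lam ybig = 1 := hμbig
          have hkerY : LinearMap.ker lam ≠ ⊤ := by
            intro hcon
            apply hl0
            have : y₀ ∈ LinearMap.ker lam := by rw [hcon]; trivial
            exact LinearMap.mem_ker.1 this
          have hrank : Module.finrank K (LinearMap.ker lam) < Module.finrank K Y :=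
            Submodule.finrank_lt hkerY
          set X' := LinearMap.ker μ with hX'
          set Y' := LinearMap.ker lam with hY'
          have hpX' : ∀ x' : X', pM (x' : X) ∈ Y' := fun x' =>
            LinearMap.mem_ker.2 (LinearMap.mem_ker.1 x'.2)
          have hqX' : ∀ x' : X', qM (x' : X) ∈ Y' := fun x' =>
            LinearMap.mem_ker.2 (hlq _)
          set pM'' : X' →ₗ[K] Y' := LinearMap.codRestrict Y' (pM.comp X'.subtype) hpX' with hpM''
          set qM'' : X' →ₗ[K] Y' := LinearMap.codRestrict Y' (qM.comp X'.subtype) hqX' with hqM''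
          obtain ⟨φ'₁, hlift₁, hC₁⟩ := ih pM'' qM'' (φ.comp Y'.subtype)
            (fun x' => hφ (x' : X)) (by omega)
          set σ : V := φ'₁ ⟨qM xbig, LinearMap.mem_ker.2 (hlq xbig)⟩ with hσdef
          have hσ : S.mkQ σ = φ (qM xbig) := hlift₁ _
          obtain ⟨c, hcC, hc1, hc2⟩ := exists_of_mem_D (hφ xbig)
          have hσc : σ - c.2 ∈ S := (Submodule.Quotient.eq S).1
            (by simpa using hσ.trans hc2.symm)
          obtain ⟨t, htS, htC⟩ := hAx2 _ hσc
          set ℓ : V := c.1 + t with hℓdef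
          have hℓ : S.mkQ ℓ = φ ybig := by
            have ht0 : S.mkQ t = 0 := by
              simpa using (Submodule.Quotient.mk_eq_zero S).2 htS
            rw [hℓdef, map_add, hc1, ht0, add_zero]
          have hℓσ : ((ℓ, σ) : V × V) ∈ C := by
            have := C.add_mem hcC htC
            have e : ((c.1, c.2) : V × V) + (t, σ - c.2) = (ℓ, σ) := by
              simp [Prod.ext_iff, hℓdef]
            rwa [e] at this
          set prj : Y →ₗ[K] Y' :=
            LinearMap.codRestrict Y' (LinearMap.id - lam.smulRight ybig)
              (fun y => LinearMap.mem_ker.2 (by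
                show lam (y - lam y • ybig) = 0
                rw [map_sub, map_smul, hlybig, smul_eq_mul, mul_one, sub_self])) with hprj
          have hprjapp : ∀ y : Y, (prj y : Y) = y - lam y • ybig := fun y => rfl
          set φ' : Y →ₗ[K] V := φ'₁.comp prj + lam.smulRight ℓ with hφ'
          have hφ'app : ∀ y, φ' y = φ'₁ (prj y) + lam y • ℓ := fun y => rfl
          have hφ'Y' : ∀ (y' : Y) (hy' : lam y' = 0),
              φ' y' = φ'₁ ⟨y', LinearMap.mem_ker.2 hy'⟩ := by
            intro y' hy'
            have hz : lam y' • ℓ = 0 := by rw [hy', zero_smul]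
            rw [hφ'app, hz, add_zero]
            congr 1
            apply Subtype.ext
            rw [hprjapp]
            show y' - lam y' • ybig = y'
            rw [hy', zero_smul, sub_zero]
          refine ⟨φ', ?_, ?_⟩
          · intro y
            rw [hφ'app, map_add, map_smul, hℓ]
            have h1 : S.mkQ (φ'₁ (prj y)) = φ ((prj y : Y)) := hlift₁ _
            rw [h1, hprjapp, map_sub, map_smul]
            abel
          · intro x
            set x' : X := x - μ x • xbig with hx'def
            have hx'mem : x' ∈ X' := by
              apply LinearMap.mem_ker.2
              rw [hx'def, map_sub, map_smul, hμbig, smul_eq_mul, mul_one, sub_self]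
            set Θ : X →ₗ[K] V × V := (φ'.comp pM).prod (φ'.comp qM) with hΘ
            have hΘapp : ∀ z, Θ z = (φ' (pM z), φ' (qM z)) := fun z => rfl
            have hxdec : x = x' + μ x • xbig := by rw [hx'def]; abel
            have hmem1 : Θ x' ∈ C := by
              rw [hΘapp]
              have e1 : φ' (pM x') = φ'₁ (pM'' ⟨x', hx'mem⟩) := by
                rw [hφ'Y' (pM x') (LinearMap.mem_ker.1 (hpX' ⟨x', hx'mem⟩))]
                exact congrArg φ'₁ (Subtype.ext rfl)
              have e2 : φ' (qM x') = φ'₁ (qM'' ⟨x', hx'mem⟩) := by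
                rw [hφ'Y' (qM x') (LinearMap.mem_ker.1 (hqX' ⟨x', hx'mem⟩))]
                exact congrArg φ'₁ (Subtype.ext rfl)
              rw [e1, e2]
              exact hC₁ ⟨x', hx'mem⟩
            have hmem2 : Θ xbig ∈ C := by
              rw [hΘapp]
              have e1 : φ' (pM xbig) = ℓ := by
                rw [hφ'app]
                have h0 : (prj ybig : Y) = 0 := by
                  rw [hprjapp, hlybig, one_smul, sub_self]
                have : prj ybig = 0 := Subtype.ext h0
                show φ'₁ (prj ybig) + lam ybig • ℓ = ℓ
                rw [this, map_zero, zero_add, hlybig, one_smul]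
              have e2 : φ' (qM xbig) = σ := by
                rw [hφ'Y' (qM xbig) (hlq xbig)]
              rw [e1, e2]
              exact hℓσ
            have : Θ x ∈ C := by
              rw [hxdec, map_add, map_smul]
              exact C.add_mem hmem1 (C.smul_mem _ hmem2)
            rwa [hΘapp] at this
      · -- case 2 : pM not surjective
        obtain ⟨y₀, hy₀⟩ : ∃ y, y ∉ LinearMap.range pM := by
          by_contra hcon
          push_neg at hcon
          exact hp (Submodule.eq_top_iff'.2 hcon)
        have hv : (LinearMap.range pM).mkQ y₀ ≠ 0 := by
          intro h0
          exact hy₀ ((Submodule.Quotient.mk_eq_zero _).1 (by simpa using h0))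
        obtain ⟨ζ, hζ⟩ : ∃ ζ : Module.Dual K (Y ⧸ LinearMap.range pM),
            ζ ((LinearMap.range pM).mkQ y₀) ≠ 0 := by
          by_contra hcon
          push_neg at hcon
          exact hv ((Module.forall_dual_apply_eq_zero_iff K _).1 hcon)
        set lam : Y →ₗ[K] K := ζ.comp (LinearMap.range pM).mkQ with hlam
        have hlp : ∀ x, lam (pM x) = 0 := by
          intro x
          have : (LinearMap.range pM).mkQ (pM x) = 0 := by
            simp [Submodule.mkQ_apply, (Submodule.Quotient.mk_eq_zero _).2 (LinearMap.mem_range_self pM x)]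
          show ζ ((LinearMap.range pM).mkQ (pM x)) = 0
          rw [this, map_zero]
        have hl0 : lam y₀ ≠ 0 := hζ
        set μ : X →ₗ[K] K := lam.comp qM with hμ
        have hμ0 : ∃ x, μ x ≠ 0 := by
          by_contra hcon
          push_neg at hcon
          apply hl0
          have hy₀mem : y₀ ∈ LinearMap.range pM ⊔ LinearMap.range qM := by
            rw [hY₀]; trivial
          obtain ⟨a, ha, b, hb, rfl⟩ := Submodule.mem_sup.1 hy₀mem
          obtain ⟨xa, rfl⟩ := ha
          obtain ⟨xb, rfl⟩ := hb
          rw [map_add, hlp xa, show lam (qM xb) = μ xb from rfl, hcon xb, add_zero]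
        obtain ⟨x₁, hx₁⟩ := hμ0
        have hμbig : μ ((μ x₁)⁻¹ • x₁) = 1 := by
          rw [map_smul, smul_eq_mul, inv_mul_cancel₀ hx₁]
        set xbig : X := (μ x₁)⁻¹ • x₁ with hxbig
        set ybig : Y := qM xbig with hybig
        have hlybig : lam ybig = 1 := hμbig
        have hkerY : LinearMap.ker lam ≠ ⊤ := by
          intro hcon
          apply hl0
          have : y₀ ∈ LinearMap.ker lam := by rw [hcon]; trivial
          exact LinearMap.mem_ker.1 this
        have hrank : Module.finrank K (LinearMap.ker lam) < Module.finrank K Y :=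
          Submodule.finrank_lt hkerY
        set X' := LinearMap.ker μ with hX'
        set Y' := LinearMap.ker lam with hY'
        have hpX' : ∀ x' : X', pM (x' : X) ∈ Y' := fun x' =>
          LinearMap.mem_ker.2 (hlp _)
        have hqX' : ∀ x' : X', qM (x' : X) ∈ Y' := fun x' =>
          LinearMap.mem_ker.2 (LinearMap.mem_ker.1 x'.2)
        set pM'' : X' →ₗ[K] Y' := LinearMap.codRestrict Y' (pM.comp X'.subtype) hpX' with hpM''
        set qM'' : X' →ₗ[K] Y' := LinearMap.codRestrict Y' (qM.comp X'.subtype) hqX' with hqM''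
        obtain ⟨φ'₁, hlift₁, hC₁⟩ := ih pM'' qM'' (φ.comp Y'.subtype)
          (fun x' => hφ (x' : X)) (by omega)
        set σ : V := φ'₁ ⟨pM xbig, LinearMap.mem_ker.2 (hlp xbig)⟩ with hσdef
        have hσ : S.mkQ σ = φ (pM xbig) := hlift₁ _
        obtain ⟨c, hcC, hc1, hc2⟩ := exists_of_mem_D (hφ xbig)
        have hσc : σ - c.1 ∈ S := (Submodule.Quotient.eq S).1
          (by simpa using hσ.trans hc1.symm)
        obtain ⟨t, htS, htC⟩ := hAx1 _ hσc
        set ℓ : V := c.2 + t with hℓdef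
        have hℓ : S.mkQ ℓ = φ ybig := by
          have ht0 : S.mkQ t = 0 := by
            simpa using (Submodule.Quotient.mk_eq_zero S).2 htS
          rw [hℓdef, map_add, hc2, ht0, add_zero]
        have hσℓ : ((σ, ℓ) : V × V) ∈ C := by
          have := C.add_mem hcC htC
          have e : ((c.1, c.2) : V × V) + (σ - c.1, t) = (σ, ℓ) := by
            simp [Prod.ext_iff, hℓdef]
          rwa [e] at this
        set prj : Y →ₗ[K] Y' :=
          LinearMap.codRestrict Y' (LinearMap.id - lam.smulRight ybig)
            (fun y => LinearMap.mem_ker.2 (by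
              show lam (y - lam y • ybig) = 0
              rw [map_sub, map_smul, hlybig, smul_eq_mul, mul_one, sub_self])) with hprj
        have hprjapp : ∀ y : Y, (prj y : Y) = y - lam y • ybig := fun y => rfl
        set φ' : Y →ₗ[K] V := φ'₁.comp prj + lam.smulRight ℓ with hφ'
        have hφ'app : ∀ y, φ' y = φ'₁ (prj y) + lam y • ℓ := fun y => rfl
        have hφ'Y' : ∀ (y' : Y) (hy' : lam y' = 0),
            φ' y' = φ'₁ ⟨y', LinearMap.mem_ker.2 hy'⟩ := by
          intro y' hy'
          have hz : lam y' • ℓ = 0 := by rw [hy', zero_smul]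
          rw [hφ'app, hz, add_zero]
          congr 1
          apply Subtype.ext
          rw [hprjapp]
          show y' - lam y' • ybig = y'
          rw [hy', zero_smul, sub_zero]
        refine ⟨φ', ?_, ?_⟩
        · intro y
          rw [hφ'app, map_add, map_smul, hℓ]
          have h1 : S.mkQ (φ'₁ (prj y)) = φ ((prj y : Y)) := hlift₁ _
          rw [h1, hprjapp, map_sub, map_smul]
          abel
        · intro x
          set x' : X := x - μ x • xbig with hx'def
          have hx'mem : x' ∈ X' := by
            apply LinearMap.mem_ker.2
            rw [hx'def, map_sub, map_smul, hμbig, smul_eq_mul, mul_one, sub_self]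
          set Θ : X →ₗ[K] V × V := (φ'.comp pM).prod (φ'.comp qM) with hΘ
          have hΘapp : ∀ z, Θ z = (φ' (pM z), φ' (qM z)) := fun z => rfl
          have hxdec : x = x' + μ x • xbig := by rw [hx'def]; abel
          have hmem1 : Θ x' ∈ C := by
            rw [hΘapp]
            have e1 : φ' (pM x') = φ'₁ (pM'' ⟨x', hx'mem⟩) := by
              rw [hφ'Y' (pM x') (LinearMap.mem_ker.1 (hpX' ⟨x', hx'mem⟩))]
              exact congrArg φ'₁ (Subtype.ext rfl)
            have e2 : φ' (qM x') = φ'₁ (qM'' ⟨x', hx'mem⟩) := by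
              rw [hφ'Y' (qM x') (LinearMap.mem_ker.1 (hqX' ⟨x', hx'mem⟩))]
              exact congrArg φ'₁ (Subtype.ext rfl)
            rw [e1, e2]
            exact hC₁ ⟨x', hx'mem⟩
          have hmem2 : Θ xbig ∈ C := by
            rw [hΘapp]
            have e1 : φ' (pM xbig) = σ := by
              rw [hφ'Y' (pM xbig) (hlp xbig)]
            have e2 : φ' (qM xbig) = ℓ := by
              rw [hφ'app]
              have h0 : (prj ybig : Y) = 0 := by
                rw [hprjapp, hlybig, one_smul, sub_self]
              have : prj ybig = 0 := Subtype.ext h0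
              show φ'₁ (prj ybig) + lam ybig • ℓ = ℓ
              rw [this, map_zero, zero_add, hlybig, one_smul]
            rw [e1, e2]
            exact hσℓ
          have : Θ x ∈ C := by
            rw [hxdec, map_add, map_smul]
            exact C.add_mem hmem1 (C.smul_mem _ hmem2)
          rwa [hΘapp] at this
    · -- case 1 : the images do not span Y
      set Y₀ := LinearMap.range pM ⊔ LinearMap.range qM with hY₀def
      have hrank : Module.finrank K Y₀ < Module.finrank K Y :=
        Submodule.finrank_lt hY₀
      have hpmem : ∀ x, pM x ∈ Y₀ := fun x =>
        Submodule.mem_sup_left (LinearMap.mem_range_self pM x)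
      have hqmem : ∀ x, qM x ∈ Y₀ := fun x =>
        Submodule.mem_sup_right (LinearMap.mem_range_self qM x)
      set pM' : X →ₗ[K] Y₀ := LinearMap.codRestrict Y₀ pM hpmem with hpM'
      set qM' : X →ₗ[K] Y₀ := LinearMap.codRestrict Y₀ qM hqmem with hqM'
      obtain ⟨φ'₀, hlift₀, hC₀⟩ := ih pM' qM' (φ.comp Y₀.subtype)
        (fun x => hφ x) (by omega)
      obtain ⟨Y₁, hcompl⟩ := Submodule.exists_isCompl Y₀
      obtain ⟨g₁, hg₁⟩ := exists_linear_lift (S := S) (φ.comp Y₁.subtype)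
      set pr0 : Y →ₗ[K] Y₀ := Submodule.linearProjOfIsCompl Y₀ Y₁ hcompl with hpr0
      set pr1 : Y →ₗ[K] Y₁ := Submodule.linearProjOfIsCompl Y₁ Y₀ hcompl.symm with hpr1
      set φ' : Y →ₗ[K] V := φ'₀.comp pr0 + g₁.comp pr1 with hφ'
      have hφ'app : ∀ y, φ' y = φ'₀ (pr0 y) + g₁ (pr1 y) := fun y => rfl
      have hdecomp : ∀ y : Y, ((pr0 y : Y) + (pr1 y : Y)) = y := fun y =>
        Submodule.projection_add_projection_eq_self hcompl y
      refine ⟨φ', ?_, ?_⟩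
      · intro y
        rw [hφ'app, map_add, hlift₀, hg₁]
        show φ (pr0 y : Y) + φ (pr1 y : Y) = φ y
        rw [← map_add, hdecomp]
      · intro x
        have e1 : φ' (pM x) = φ'₀ (pM' x) := by
          rw [hφ'app]
          have h0 : pr0 (pM x) = pM' x := by
            rw [hpr0]
            exact Submodule.linearProjOfIsCompl_apply_left hcompl (pM' x)
          have h1 : pr1 (pM x) = 0 := by
            rw [hpr1]
            exact Submodule.linearProjOfIsCompl_apply_right hcompl.symm (pM' x)
          rw [h0, h1, map_zero, add_zero]
        have e2 : φ' (qM x) = φ'₀ (qM' x) := by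
          rw [hφ'app]
          have h0 : pr0 (qM x) = qM' x := by
            rw [hpr0]
            exact Submodule.linearProjOfIsCompl_apply_left hcompl (qM' x)
          have h1 : pr1 (qM x) = 0 := by
            rw [hpr1]
            exact Submodule.linearProjOfIsCompl_apply_right hcompl.symm (qM' x)
          rw [h0, h1, map_zero, add_zero]
        rw [e1, e2]
        exact hC₀ x

end WithS

end KroneckerPure

end Aux

/-- `(C^♭, C|_{C^♭})` and `(C^♯, C|_{C^♯})` are pure submodules of `(V,C)` as
Kronecker modules: for `U = C^♭` or `U = C^♯` (a subspace `S` with underlying set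
`C^♭` or `C^♯`), every morphism from a finite-dimensional Kronecker module
`(X, Y, pM, qM)` to the quotient `(V/U, C/C|_U)` (realized via the image `D` of `C`
in `(V/U)²`, whose relation module is the quotient Kronecker module) lifts to a
morphism to `(V, C)`. -/
theorem flat_and_sharp_are_pure
    {V : Type*} [AddCommGroup V] [Module K V] (C : Submodule K (V × V))
    (S : Submodule K V) (hS : (S : Set V) = cflat C ∨ (S : Set V) = csharp C)
    {X Y : Type*} [AddCommGroup X] [Module K X] [AddCommGroup Y] [Module K Y]
    [FiniteDimensional K X] [FiniteDimensional K Y]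
    (pM qM : X →ₗ[K] Y)
    (θ : X →ₗ[K] ↥(C.map (S.mkQ.prodMap S.mkQ))) (φ : Y →ₗ[K] V ⧸ S)
    (h1 : ∀ x, ((θ x : (V ⧸ S) × (V ⧸ S))).1 = φ (pM x))
    (h2 : ∀ x, ((θ x : (V ⧸ S) × (V ⧸ S))).2 = φ (qM x)) :
    ∃ (θ' : X →ₗ[K] ↥C) (φ' : Y →ₗ[K] V),
      (∀ x, ((θ' x : V × V)).1 = φ' (pM x)) ∧
      (∀ x, ((θ' x : V × V)).2 = φ' (qM x)) ∧
      (∀ y, S.mkQ (φ' y) = φ y) ∧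
      (∀ x, (S.mkQ.prodMap S.mkQ) (θ' x : V × V) = (θ x : (V ⧸ S) × (V ⧸ S))) := by
  classical
  have hφ : ∀ x, ((φ (pM x), φ (qM x)) : _ × _) ∈ C.map (S.mkQ.prodMap S.mkQ) := by
    intro x
    have hmem := (θ x).2
    have e : ((θ x : (V ⧸ S) × (V ⧸ S))) = (φ (pM x), φ (qM x)) :=
      Prod.ext (h1 x) (h2 x)
    rwa [e] at hmem
  obtain ⟨φ', hlift, hC⟩ := KroneckerPure.key (C := C) (S := S) hS
    (Module.finrank K Y + 1) pM qM φ hφ (by omega)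
  refine ⟨LinearMap.codRestrict C ((φ'.comp pM).prod (φ'.comp qM)) (fun x => hC x), φ',
    fun x => rfl, fun x => rfl, hlift, ?_⟩
  intro x
  have e1 : ((LinearMap.codRestrict C ((φ'.comp pM).prod (φ'.comp qM)) (fun x => hC x)) x :
      V × V) = (φ' (pM x), φ' (qM x)) := rfl
  have e2 : ((θ x : (V ⧸ S) × (V ⧸ S))) = (φ (pM x), φ (qM x)) :=
    Prod.ext (h1 x) (h2 x)
  rw [e1, e2]
  refine Prod.ext ?_ ?_
  · show S.mkQ (φ' (pM x)) = φ (pM x)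
    exact hlift _
  · show S.mkQ (φ' (qM x)) = φ (qM x)
    exact hlift _
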